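/- The complex beta function admits the expansion β_ℂ(s,t) = (1/s + 1/t)·exp(∑_{n≥3 odd} ((-1)^{n-1}·2ζ(n)/n)·((s+t)^n - s^n - t^n)) for s,t in a punctured neighborhood of (0,0). -/

import Mathlib

open Complex Finset Filter Topology

set_option maxHeartbeats 1000000

namespace BetaLaurent

noncomputable def cc (s t : ℂ) (k : ℕ) : ℂ :=
  2 * ((s + t) ^ (2 * k + 3) - s ^ (2 * k + 3) - t ^ (2 * k + 3)) / (2 * (k : ℂ) + 3)

noncomputable def bb (s t : ℂ) (m : ℕ) : ℂ :=
  (Complex.log (1 + (s + t) / ((m : ℂ) + 1)) - Complex.log (1 - (s + t) / ((m : ℂ) + 1))) -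
    ((Complex.log (1 + s / ((m : ℂ) + 1)) - Complex.log (1 - s / ((m : ℂ) + 1))) +
     (Complex.log (1 + t / ((m : ℂ) + 1)) - Complex.log (1 - t / ((m : ℂ) + 1))))

lemma hasSum_lam {w : ℂ} (hw : ‖w‖ < 1) :
    HasSum (fun n : ℕ => (-1) ^ (n + 1) * w ^ n / n + w ^ n / n)
      (Complex.log (1 + w) - Complex.log (1 - w)) := by
  simpa [sub_eq_add_neg] using (hasSum_taylorSeries_log hw).add (hasSum_taylorSeries_neg_log hw)

lemma norm_div_nat_lt {w : ℂ} {c : ℝ} (hw : ‖w‖ < c) (m : ℕ) :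
    ‖w / ((m : ℂ) + 1)‖ < c := by
  rw [norm_div]
  have h1 : (1 : ℝ) ≤ ‖((m : ℂ) + 1)‖ := by
    have h : ((m : ℂ) + 1) = ((m + 1 : ℕ) : ℂ) := by push_cast; ring
    rw [h, Complex.norm_natCast]
    exact_mod_cast Nat.one_le_iff_ne_zero.2 (Nat.succ_ne_zero m)
  have h2 : ‖w‖ / ‖((m : ℂ) + 1)‖ ≤ ‖w‖ := by
    rw [div_le_iff₀ (by linarith)]
    nlinarith [norm_nonneg w]
  linarith

lemma hasSum_bb {s t : ℂ} (hs : ‖s‖ < 1/4) (ht : ‖t‖ < 1/4) (m : ℕ) :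
    HasSum (fun k : ℕ => cc s t k * (((m : ℂ) + 1)⁻¹) ^ (2 * k + 3)) (bb s t m) := by
  have hu : ‖s + t‖ < 1/2 := lt_of_le_of_lt (norm_add_le s t) (by linarith)
  have hU : ‖(s + t) / ((m : ℂ) + 1)‖ < 1 := (norm_div_nat_lt hu m).trans (by norm_num)
  have hS : ‖s / ((m : ℂ) + 1)‖ < 1 := (norm_div_nat_lt hs m).trans (by norm_num)
  have hT : ‖t / ((m : ℂ) + 1)‖ < 1 := (norm_div_nat_lt ht m).trans (by norm_num)
  have H : HasSum (fun n : ℕ =>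
      ((-1) ^ (n + 1) * ((s+t)/((m:ℂ)+1)) ^ n / n + ((s+t)/((m:ℂ)+1)) ^ n / n) -
      (((-1) ^ (n + 1) * (s/((m:ℂ)+1)) ^ n / n + (s/((m:ℂ)+1)) ^ n / n) +
       ((-1) ^ (n + 1) * (t/((m:ℂ)+1)) ^ n / n + (t/((m:ℂ)+1)) ^ n / n))) (bb s t m) :=
    (hasSum_lam hU).sub ((hasSum_lam hS).add (hasSum_lam hT))
  set g : ℕ → ℂ := fun n =>
    ((-1) ^ (n + 1) * ((s+t)/((m:ℂ)+1)) ^ n / n + ((s+t)/((m:ℂ)+1)) ^ n / n) -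
      (((-1) ^ (n + 1) * (s/((m:ℂ)+1)) ^ n / n + (s/((m:ℂ)+1)) ^ n / n) +
       ((-1) ^ (n + 1) * (t/((m:ℂ)+1)) ^ n / n + (t/((m:ℂ)+1)) ^ n / n)) with hg
  have hinj : Function.Injective (fun k : ℕ => 2 * k + 3) := fun a b h => by
    simpa using h
  have hzero : ∀ x ∉ Set.range (fun k : ℕ => 2 * k + 3), g x = 0 := by
    intro x hx
    rcases Nat.even_or_odd x with he | ho
    · have hneg : ((-1 : ℂ)) ^ (x + 1) = -1 := (Even.add_one he).neg_one_pow
      simp only [hg, hneg]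
      ring
    · obtain ⟨j, hj⟩ := ho
      rcases Nat.eq_zero_or_pos j with rfl | hjpos
      · subst hj
        have hneg : ((-1 : ℂ)) ^ (2 * 0 + 1 + 1) = 1 := by norm_num
        simp only [hg, hneg]
        ring
      · exact absurd ⟨j - 1, by simp only []; omega⟩ hx
  have H2 := (Function.Injective.hasSum_iff hinj hzero).2 H
  have key : (fun k : ℕ => cc s t k * (((m : ℂ) + 1)⁻¹) ^ (2 * k + 3)) =
      (g ∘ fun k : ℕ => 2 * k + 3) := by
    funext k
    have hpow : ((-1 : ℂ)) ^ (2 * k + 3 + 1) = 1 := Even.neg_one_pow ⟨k + 2, by ring⟩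
    have hcast : ((2 * k + 3 : ℕ) : ℂ) = 2 * (k : ℂ) + 3 := by push_cast; ring
    simp only [Function.comp, hg, hpow, hcast, cc, div_pow, inv_pow, one_mul]
    ring
  rw [key]
  exact H2
noncomputable def ff (s t : ℂ) (p : ℕ × ℕ) : ℂ :=
  cc s t p.1 * (((p.2 : ℂ) + 1)⁻¹) ^ (2 * p.1 + 3)

lemma norm_M (m : ℕ) : ‖((m : ℂ) + 1)‖ = (m : ℝ) + 1 := by
  have h : ((m : ℂ) + 1) = ((m + 1 : ℕ) : ℂ) := by push_cast; ring
  rw [h, Complex.norm_natCast]; push_cast; ring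

lemma norm_cc_le {s t : ℂ} (hs : ‖s‖ < 1/4) (ht : ‖t‖ < 1/4) (k : ℕ) :
    ‖cc s t k‖ ≤ (1/4 : ℝ) ^ k := by
  have hu : ‖s + t‖ < 1/2 := lt_of_le_of_lt (norm_add_le s t) (by linarith)
  have hden : (1:ℝ) ≤ ‖(2 * (k : ℂ) + 3)‖ := by
    have h : (2 * (k : ℂ) + 3) = ((2 * k + 3 : ℕ) : ℂ) := by push_cast; ring
    rw [h, Complex.norm_natCast]
    exact_mod_cast Nat.one_le_iff_ne_zero.2 (by omega)
  have hX : ‖(s + t) ^ (2*k+3) - s ^ (2*k+3) - t ^ (2*k+3)‖ ≤ 3 * (1/2:ℝ) ^ (2*k+3) := by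
    have h1 : ‖(s + t) ^ (2*k+3)‖ ≤ (1/2:ℝ) ^ (2*k+3) := by
      rw [norm_pow]; exact pow_le_pow_left₀ (norm_nonneg _) hu.le _
    have h2 : ‖s ^ (2*k+3)‖ ≤ (1/2:ℝ) ^ (2*k+3) := by
      rw [norm_pow]; exact pow_le_pow_left₀ (norm_nonneg _) (by linarith) _
    have h3 : ‖t ^ (2*k+3)‖ ≤ (1/2:ℝ) ^ (2*k+3) := by
      rw [norm_pow]; exact pow_le_pow_left₀ (norm_nonneg _) (by linarith) _
    calc ‖(s + t) ^ (2*k+3) - s ^ (2*k+3) - t ^ (2*k+3)‖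
        ≤ ‖(s + t) ^ (2*k+3) - s ^ (2*k+3)‖ + ‖t ^ (2*k+3)‖ := norm_sub_le _ _
      _ ≤ ‖(s + t) ^ (2*k+3)‖ + ‖s ^ (2*k+3)‖ + ‖t ^ (2*k+3)‖ := by
          have := norm_sub_le ((s + t) ^ (2*k+3)) (s ^ (2*k+3)); linarith
      _ ≤ 3 * (1/2:ℝ) ^ (2*k+3) := by linarith
  have key : ‖cc s t k‖ ≤ 6 * (1/2:ℝ) ^ (2*k+3) := by
    rw [cc, norm_div, norm_mul, Complex.norm_ofNat]
    calc 2 * ‖(s + t) ^ (2*k+3) - s ^ (2*k+3) - t ^ (2*k+3)‖ / ‖2 * (k:ℂ) + 3‖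
        ≤ 2 * (3 * (1/2:ℝ) ^ (2*k+3)) / 1 := by
          gcongr
      _ = 6 * (1/2:ℝ) ^ (2*k+3) := by ring
  have heq : (6:ℝ) * (1/2:ℝ) ^ (2*k+3) = (3/4) * (1/4:ℝ) ^ k := by
    rw [pow_add, pow_mul]
    norm_num
    ring
  have hpos : (0:ℝ) ≤ (1/4:ℝ) ^ k := by positivity
  calc ‖cc s t k‖ ≤ 6 * (1/2:ℝ) ^ (2*k+3) := key
    _ = (3/4) * (1/4:ℝ) ^ k := heq
    _ ≤ (1/4:ℝ) ^ k := by linarith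

lemma summable_ff {s t : ℂ} (hs : ‖s‖ < 1/4) (ht : ‖t‖ < 1/4) : Summable (ff s t) := by
  have hg : Summable (fun m : ℕ => (((m : ℝ) + 1)⁻¹) ^ 2) := by
    have h0 : Summable (fun n : ℕ => 1 / (n : ℝ) ^ 2) :=
      Real.summable_one_div_nat_pow.mpr one_lt_two
    have h1 := (summable_nat_add_iff 1).2 h0
    refine h1.congr fun m => ?_
    push_cast
    rw [one_div, inv_pow]
  have hf : Summable (fun k : ℕ => (1/4 : ℝ) ^ k) :=
    summable_geometric_of_lt_one (by norm_num) (by norm_num)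
  refine Summable.of_norm_bounded (g := fun p : ℕ × ℕ => (1/4:ℝ) ^ p.1 * (((p.2 : ℝ) + 1)⁻¹) ^ 2)
    (hf.mul_of_nonneg hg (fun k => by positivity) (fun m => by positivity)) ?_
  rintro ⟨k, m⟩
  rw [ff, norm_mul]
  have h2 : ‖(((m : ℂ) + 1)⁻¹) ^ (2 * k + 3)‖ ≤ (((m : ℝ) + 1)⁻¹) ^ 2 := by
    rw [norm_pow, norm_inv, norm_M]
    refine pow_le_pow_of_le_one (by positivity) ?_ (by omega)
    rw [inv_le_one_iff₀]
    right; push_cast; linarith [Nat.cast_nonneg (α := ℝ) m]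
  exact mul_le_mul (norm_cc_le hs ht k) h2 (norm_nonneg _) (by positivity)
lemma zeta_eq (k : ℕ) :
    riemannZeta (2 * (k : ℂ) + 3) = ∑' m : ℕ, (((m : ℂ) + 1)⁻¹) ^ (2 * k + 3) := by
  have hre : 1 < ((2 * k + 3 : ℕ) : ℂ).re := by
    rw [Complex.natCast_re]; exact_mod_cast by omega
  rw [show (2 * (k : ℂ) + 3) = ((2 * k + 3 : ℕ) : ℂ) by push_cast; ring,
    zeta_eq_tsum_one_div_nat_add_one_cpow hre]
  refine tsum_congr fun m => ?_
  rw [Complex.cpow_natCast, one_div, inv_pow]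

lemma hasSum_fiber {s t : ℂ} (hs : ‖s‖ < 1/4) (ht : ‖t‖ < 1/4) (k : ℕ) :
    HasSum (fun m : ℕ => ff s t (k, m)) (cc s t k * riemannZeta (2 * (k : ℂ) + 3)) := by
  have hsum := ((summable_ff hs ht).prod_factor k).hasSum
  have heq : ∑' m : ℕ, ff s t (k, m) = cc s t k * riemannZeta (2 * (k : ℂ) + 3) := by
    have : (fun m : ℕ => ff s t (k, m)) =
        fun m : ℕ => cc s t k * (((m : ℂ) + 1)⁻¹) ^ (2 * k + 3) := rfl
    rw [this, tsum_mul_left, zeta_eq]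
  exact heq ▸ hsum

lemma summable_cz {s t : ℂ} (hs : ‖s‖ < 1/4) (ht : ‖t‖ < 1/4) :
    Summable (fun k : ℕ => cc s t k * riemannZeta (2 * (k : ℂ) + 3)) := by
  refine ((summable_ff hs ht).prod).congr fun k => ?_
  exact (hasSum_fiber hs ht k).tsum_eq

lemma hasSum_bb_total {s t : ℂ} (hs : ‖s‖ < 1/4) (ht : ‖t‖ < 1/4) :
    HasSum (bb s t) (∑' k : ℕ, cc s t k * riemannZeta (2 * (k : ℂ) + 3)) := by
  have hsummb : Summable (bb s t) := by
    refine (((summable_ff hs ht).prod_symm).prod).congr fun m => ?_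
    exact (hasSum_bb hs ht m).tsum_eq
  rw [hsummb.hasSum_iff]
  calc ∑' m : ℕ, bb s t m = ∑' (m : ℕ) (k : ℕ), ff s t (k, m) :=
        tsum_congr fun m => (hasSum_bb hs ht m).tsum_eq.symm
    _ = ∑' (k : ℕ) (m : ℕ), ff s t (k, m) :=
        Summable.tsum_comm' (summable_ff hs ht) (fun k => (summable_ff hs ht).prod_factor k)
          (fun m => (hasSum_bb hs ht m).summable)
    _ = ∑' k : ℕ, cc s t k * riemannZeta (2 * (k : ℂ) + 3) :=
        tsum_congr fun k => (hasSum_fiber hs ht k).tsum_eq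
noncomputable def Pp (z : ℂ) (n : ℕ) : ℂ := ∏ j ∈ range (n + 1), (1 + z / ((j : ℂ) + 1))

lemma one_add_ne {z : ℂ} (h : ‖z‖ < 1) : 1 + z ≠ 0 := by
  intro hz
  have : z = -1 := by linear_combination hz
  rw [this] at h
  simp at h

lemma one_sub_div_ne {z : ℂ} (h : ‖z‖ < 1) (m : ℕ) : 1 - z / ((m : ℂ) + 1) ≠ 0 := by
  have : 1 + (-z) / ((m : ℂ) + 1) ≠ 0 := one_add_ne (norm_div_nat_lt (by rwa [norm_neg]) m)
  intro hz; apply this; rw [← hz]; ring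

lemma one_add_div_ne {z : ℂ} (h : ‖z‖ < 1) (m : ℕ) : 1 + z / ((m : ℂ) + 1) ≠ 0 :=
  one_add_ne (norm_div_nat_lt h m)

lemma Pp_ne_zero {z : ℂ} (h : ‖z‖ < 1) (n : ℕ) : Pp z n ≠ 0 :=
  Finset.prod_ne_zero_iff.2 fun j _ => one_add_div_ne h j

lemma exp_bb {s t : ℂ} (hs : ‖s‖ < 1/4) (ht : ‖t‖ < 1/4) (m : ℕ) :
    Complex.exp (bb s t m) =
      ((1 + (s+t) / ((m:ℂ)+1)) / (1 - (s+t) / ((m:ℂ)+1))) /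
        (((1 + s / ((m:ℂ)+1)) / (1 - s / ((m:ℂ)+1))) *
         ((1 + t / ((m:ℂ)+1)) / (1 - t / ((m:ℂ)+1)))) := by
  have hu : ‖s + t‖ < 1 := lt_of_le_of_lt (norm_add_le s t) (by linarith)
  have hs1 : ‖s‖ < 1 := by linarith
  have ht1 : ‖t‖ < 1 := by linarith
  rw [bb, Complex.exp_sub, Complex.exp_add, Complex.exp_sub, Complex.exp_sub, Complex.exp_sub,
    Complex.exp_log (one_add_div_ne hu m), Complex.exp_log (one_sub_div_ne hu m),
    Complex.exp_log (one_add_div_ne hs1 m), Complex.exp_log (one_sub_div_ne hs1 m),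
    Complex.exp_log (one_add_div_ne ht1 m), Complex.exp_log (one_sub_div_ne ht1 m)]

lemma prod_exp_bb {s t : ℂ} (hs : ‖s‖ < 1/4) (ht : ‖t‖ < 1/4) (n : ℕ) :
    ∏ j ∈ range (n + 1), Complex.exp (bb s t j) =
      (Pp (s+t) n / Pp (-(s+t)) n) / ((Pp s n / Pp (-s) n) * (Pp t n / Pp (-t) n)) := by
  rw [Finset.prod_congr rfl fun j _ => exp_bb hs ht j]
  have hsub : ∀ z : ℂ, ∀ j : ℕ, (1 - z / ((j:ℂ)+1)) = (1 + (-z) / ((j:ℂ)+1)) := by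
    intro z j; ring
  simp only [Pp, ← Finset.prod_div_distrib, ← Finset.prod_mul_distrib]
  exact Finset.prod_congr rfl fun j _ => by rw [hsub s j, hsub t j, hsub (s+t) j]

lemma prod_shift (w : ℂ) (n : ℕ) :
    ∏ j ∈ range (n + 1), (1 + w + (j : ℂ)) = (∏ j ∈ range (n + 1), ((j : ℂ) + 1)) * Pp w n := by
  rw [Pp, ← Finset.prod_mul_distrib]
  refine Finset.prod_congr rfl fun j _ => ?_
  have hj : ((j : ℂ) + 1) ≠ 0 := Nat.cast_add_one_ne_zero j
  field_simp
  ring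

lemma gammaSeq_identity {s t : ℂ} (hs : ‖s‖ < 1/4) (ht : ‖t‖ < 1/4) {n : ℕ} (hn : n ≠ 0) :
    Complex.GammaSeq (1 + (s + t)) n * Complex.GammaSeq (1 - s) n * Complex.GammaSeq (1 - t) n *
        ∏ j ∈ range (n + 1), Complex.exp (bb s t j) =
      Complex.GammaSeq (1 + s) n * Complex.GammaSeq (1 + t) n *
        Complex.GammaSeq (1 - (s + t)) n := by
  have hu : ‖s + t‖ < 1 := lt_of_le_of_lt (norm_add_le s t) (by linarith)
  have hs1 : ‖s‖ < 1 := by linarith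
  have ht1 : ‖t‖ < 1 := by linarith
  have hnn : ((n : ℂ)) ≠ 0 := Nat.cast_ne_zero.mpr hn
  have hA : (n : ℂ) ^ s ≠ 0 := fun h => hnn ((Complex.cpow_eq_zero_iff _ _).1 h).1
  have hB : (n : ℂ) ^ t ≠ 0 := fun h => hnn ((Complex.cpow_eq_zero_iff _ _).1 h).1
  have hQ : (∏ j ∈ range (n + 1), ((j : ℂ) + 1)) ≠ 0 :=
    Finset.prod_ne_zero_iff.2 fun j _ => Nat.cast_add_one_ne_zero j
  have hfac : ((Nat.factorial n : ℕ) : ℂ) ≠ 0 := Nat.cast_ne_zero.mpr (Nat.factorial_ne_zero n)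
  have e1 : (n : ℂ) ^ (1 + (s + t)) = n * ((n : ℂ) ^ s * (n : ℂ) ^ t) := by
    rw [Complex.cpow_add _ _ hnn, Complex.cpow_one, Complex.cpow_add _ _ hnn]
  have e2 : (n : ℂ) ^ (1 - s) = n * ((n : ℂ) ^ s)⁻¹ := by
    rw [sub_eq_add_neg, Complex.cpow_add _ _ hnn, Complex.cpow_one, Complex.cpow_neg]
  have e3 : (n : ℂ) ^ (1 - t) = n * ((n : ℂ) ^ t)⁻¹ := by
    rw [sub_eq_add_neg, Complex.cpow_add _ _ hnn, Complex.cpow_one, Complex.cpow_neg]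
  have e4 : (n : ℂ) ^ (1 + s) = n * (n : ℂ) ^ s := by
    rw [Complex.cpow_add _ _ hnn, Complex.cpow_one]
  have e5 : (n : ℂ) ^ (1 + t) = n * (n : ℂ) ^ t := by
    rw [Complex.cpow_add _ _ hnn, Complex.cpow_one]
  have e6 : (n : ℂ) ^ (1 - (s + t)) = n * ((n : ℂ) ^ s * (n : ℂ) ^ t)⁻¹ := by
    rw [sub_eq_add_neg, Complex.cpow_add _ _ hnn, Complex.cpow_one, Complex.cpow_neg,
      Complex.cpow_add _ _ hnn]
  have p1 : ∏ j ∈ range (n + 1), (1 + (s + t) + (j : ℂ)) =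
      (∏ j ∈ range (n + 1), ((j : ℂ) + 1)) * Pp (s + t) n := prod_shift _ n
  have p2 : ∏ j ∈ range (n + 1), (1 - s + (j : ℂ)) =
      (∏ j ∈ range (n + 1), ((j : ℂ) + 1)) * Pp (-s) n := by
    rw [← prod_shift (-s) n]; exact Finset.prod_congr rfl fun j _ => by ring
  have p3 : ∏ j ∈ range (n + 1), (1 - t + (j : ℂ)) =
      (∏ j ∈ range (n + 1), ((j : ℂ) + 1)) * Pp (-t) n := by
    rw [← prod_shift (-t) n]; exact Finset.prod_congr rfl fun j _ => by ring
  have p4 : ∏ j ∈ range (n + 1), (1 + s + (j : ℂ)) =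
      (∏ j ∈ range (n + 1), ((j : ℂ) + 1)) * Pp s n := prod_shift _ n
  have p5 : ∏ j ∈ range (n + 1), (1 + t + (j : ℂ)) =
      (∏ j ∈ range (n + 1), ((j : ℂ) + 1)) * Pp t n := prod_shift _ n
  have p6 : ∏ j ∈ range (n + 1), (1 - (s + t) + (j : ℂ)) =
      (∏ j ∈ range (n + 1), ((j : ℂ) + 1)) * Pp (-(s + t)) n := by
    rw [← prod_shift (-(s + t)) n]; exact Finset.prod_congr rfl fun j _ => by ring
  rw [prod_exp_bb hs ht n]
  simp only [Complex.GammaSeq]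
  rw [p1, p2, p3, p4, p5, p6, e1, e2, e3, e4, e5, e6]
  set N := (n : ℂ) with hN
  set F := ((Nat.factorial n : ℕ) : ℂ) with hF
  set Q := ∏ j ∈ range (n + 1), ((j : ℂ) + 1) with hQd
  set A := N ^ s with hAd
  set B := N ^ t with hBd
  set P1 := Pp (s + t) n with hP1d
  set P2 := Pp (-(s + t)) n with hP2d
  set P3 := Pp s n with hP3d
  set P4 := Pp (-s) n with hP4d
  set P5 := Pp t n with hP5d
  set P6 := Pp (-t) n with hP6d
  have hP1 := Pp_ne_zero hu n
  have hP2 := Pp_ne_zero (show ‖-(s+t)‖ < 1 by rwa [norm_neg]) n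
  have hP3 := Pp_ne_zero hs1 n
  have hP4 := Pp_ne_zero (show ‖-s‖ < 1 by rwa [norm_neg]) n
  have hP5 := Pp_ne_zero ht1 n
  have hP6 := Pp_ne_zero (show ‖-t‖ < 1 by rwa [norm_neg]) n
  rw [← hP1d] at hP1
  rw [← hP2d] at hP2
  rw [← hP3d] at hP3
  rw [← hP4d] at hP4
  rw [← hP5d] at hP5
  rw [← hP6d] at hP6
  field_simp


lemma key_identity {s t : ℂ} (hs : ‖s‖ < 1/4) (ht : ‖t‖ < 1/4) :
    Complex.Gamma (1 + (s + t)) * Complex.Gamma (1 - s) * Complex.Gamma (1 - t) *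
        Complex.exp (∑' k : ℕ, cc s t k * riemannZeta (2 * (k : ℂ) + 3)) =
      Complex.Gamma (1 + s) * Complex.Gamma (1 + t) * Complex.Gamma (1 - (s + t)) := by
  set T := ∑' k : ℕ, cc s t k * riemannZeta (2 * (k : ℂ) + 3) with hT
  have h1 : Tendsto (fun n : ℕ => ∑ j ∈ range (n + 1), bb s t j) atTop (𝓝 T) :=
    (hasSum_bb_total hs ht).tendsto_sum_nat.comp (tendsto_add_atTop_nat 1)
  have h2 : Tendsto (fun n : ℕ => ∏ j ∈ range (n + 1), Complex.exp (bb s t j)) atTop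
      (𝓝 (Complex.exp T)) := by
    have := h1.cexp
    refine this.congr fun n => ?_
    exact Complex.exp_sum _ _
  have hL : Tendsto (fun n : ℕ => Complex.GammaSeq (1 + (s + t)) n * Complex.GammaSeq (1 - s) n *
      Complex.GammaSeq (1 - t) n * ∏ j ∈ range (n + 1), Complex.exp (bb s t j)) atTop
      (𝓝 (Complex.Gamma (1 + (s + t)) * Complex.Gamma (1 - s) * Complex.Gamma (1 - t) *
        Complex.exp T)) :=
    (((Complex.GammaSeq_tendsto_Gamma _).mul (Complex.GammaSeq_tendsto_Gamma _)).mul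
      (Complex.GammaSeq_tendsto_Gamma _)).mul h2
  have hR : Tendsto (fun n : ℕ => Complex.GammaSeq (1 + s) n * Complex.GammaSeq (1 + t) n *
      Complex.GammaSeq (1 - (s + t)) n) atTop
      (𝓝 (Complex.Gamma (1 + s) * Complex.Gamma (1 + t) * Complex.Gamma (1 - (s + t)))) :=
    ((Complex.GammaSeq_tendsto_Gamma _).mul (Complex.GammaSeq_tendsto_Gamma _)).mul
      (Complex.GammaSeq_tendsto_Gamma _)
  have heq : (fun n : ℕ => Complex.GammaSeq (1 + (s + t)) n * Complex.GammaSeq (1 - s) n *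
      Complex.GammaSeq (1 - t) n * ∏ j ∈ range (n + 1), Complex.exp (bb s t j)) =ᶠ[atTop]
      (fun n : ℕ => Complex.GammaSeq (1 + s) n * Complex.GammaSeq (1 + t) n *
        Complex.GammaSeq (1 - (s + t)) n) := by
    filter_upwards [eventually_ge_atTop 1] with n hn
    exact gammaSeq_identity hs ht (by omega)
  exact tendsto_nhds_unique (hL.congr' heq) hR


end BetaLaurent

open BetaLaurent in
/-- **Laurent expansion of the complex beta function.** With
`β_ℂ(s,t) = Γ(s)Γ(t)Γ(1-s-t)/(Γ(s+t)Γ(1-s)Γ(1-t))`, one has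
`β_ℂ(s,t) = (1/s + 1/t)·exp(∑_{n≥3 odd} ((-1)^{n-1}·2ζ(n)/n)·((s+t)^n - s^n - t^n))`
for `s, t` in a punctured neighbourhood of `(0,0)`; the series over odd `n ≥ 3`
(indexed by `n = 2k+3`, where `(-1)^{n-1} = 1`) converges for `|s|, |t|` small. -/
theorem complex_beta_laurent_expansion :
    ∃ ε > (0 : ℝ), ∀ s t : ℂ, ‖s‖ < ε → ‖t‖ < ε → s ≠ 0 → t ≠ 0 → s + t ≠ 0 →
      Summable (fun k : ℕ =>
        (2 * riemannZeta (2 * k + 3) / (2 * k + 3)) *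
          ((s + t) ^ (2 * k + 3) - s ^ (2 * k + 3) - t ^ (2 * k + 3))) ∧
      Complex.Gamma s * Complex.Gamma t * Complex.Gamma (1 - s - t) /
          (Complex.Gamma (s + t) * Complex.Gamma (1 - s) * Complex.Gamma (1 - t)) =
        (1 / s + 1 / t) *
          Complex.exp (∑' k : ℕ,
            (2 * riemannZeta (2 * k + 3) / (2 * k + 3)) *
              ((s + t) ^ (2 * k + 3) - s ^ (2 * k + 3) - t ^ (2 * k + 3))) := by
  refine ⟨1/4, by norm_num, fun s t hs ht hs0 ht0 hst0 => ?_⟩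
  have hu : ‖s + t‖ < 1/2 := lt_of_le_of_lt (norm_add_le s t) (by linarith)
  have hterm : ∀ k : ℕ, cc s t k * riemannZeta (2 * (k : ℂ) + 3) =
      (2 * riemannZeta (2 * k + 3) / (2 * k + 3)) *
        ((s + t) ^ (2 * k + 3) - s ^ (2 * k + 3) - t ^ (2 * k + 3)) := by
    intro k
    simp only [cc]
    ring
  refine ⟨(summable_cz hs ht).congr hterm, ?_⟩
  have htsum : (∑' k : ℕ, (2 * riemannZeta (2 * k + 3) / (2 * k + 3)) *
      ((s + t) ^ (2 * k + 3) - s ^ (2 * k + 3) - t ^ (2 * k + 3))) =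
      ∑' k : ℕ, cc s t k * riemannZeta (2 * (k : ℂ) + 3) :=
    (tsum_congr hterm).symm
  rw [htsum]
  set T := ∑' k : ℕ, cc s t k * riemannZeta (2 * (k : ℂ) + 3) with hTd
  have key := key_identity hs ht
  have hne : ∀ z : ℂ, ‖z‖ < 1 → Complex.Gamma (1 - z) ≠ 0 := by
    intro z hz
    apply Complex.Gamma_ne_zero
    intro m h
    have hzeq : z = (m : ℂ) + 1 := by linear_combination -h
    rw [hzeq, norm_M m] at hz
    linarith [Nat.cast_nonneg (α := ℝ) m]
  have hgu : Complex.Gamma (s + t) ≠ 0 := by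
    apply Complex.Gamma_ne_zero
    intro m h
    rcases Nat.eq_zero_or_pos m with rfl | hm
    · exact hst0 (by simpa using h)
    · have h1 : ‖s + t‖ = (m : ℝ) := by rw [h, norm_neg, Complex.norm_natCast]
      have h2 : (1 : ℝ) ≤ (m : ℝ) := by exact_mod_cast hm
      linarith
  have g1 : Complex.Gamma (1 + s) = s * Complex.Gamma s := by
    rw [add_comm]; exact Complex.Gamma_add_one s hs0
  have g2 : Complex.Gamma (1 + t) = t * Complex.Gamma t := by
    rw [add_comm]; exact Complex.Gamma_add_one t ht0
  have g3 : Complex.Gamma (1 + (s + t)) = (s + t) * Complex.Gamma (s + t) := by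
    rw [add_comm]; exact Complex.Gamma_add_one _ hst0
  rw [g1, g2, g3, ← hTd] at key
  have hgs : Complex.Gamma (1 - s) ≠ 0 := hne s (by linarith)
  have hgt : Complex.Gamma (1 - t) ≠ 0 := hne t (by linarith)
  rw [show (1 : ℂ) - s - t = 1 - (s + t) by ring,
    div_eq_iff (mul_ne_zero (mul_ne_zero hgu hgs) hgt)]
  field_simp
  linear_combination -key
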